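/- Let α > 1 and define g(x) = (log max(x, 1))^α for x ∈ ℝ. Then: g is nondecreasing; g is differentiable on (1, ∞) with g′(x) → 0 as x → ∞; there exists γ ∈ (0,1) such that ∫₁^∞ exp(−(1−γ) g(x)) dx < ∞; and there exist constants x₀ > 0 and A > 0 such that g(x) − g(x−y) ≤ γ g(y) + A for all x, y with x₀ < y ≤ x/2. -/

import Mathlib

open MeasureTheory Filter Set

lemma my_rpow_sub_rpow_le {α a b : ℝ} (hα : 1 ≤ α) (hb : 0 ≤ b) (hab : b ≤ a) :
    a ^ α - b ^ α ≤ α * a ^ (α - 1) * (a - b) := by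
  rcases eq_or_lt_of_le hab with rfl | h
  · simp only [sub_self, mul_zero]; exact le_refl 0
  have ha : 0 ≤ a := hb.trans hab
  obtain ⟨c, hc, hderiv⟩ := exists_hasDerivAt_eq_slope (fun t => t ^ α)
    (fun t => α * t ^ (α - 1)) h
    ((Real.continuous_rpow_const (by linarith)).continuousOn)
    (fun t _ => Real.hasDerivAt_rpow_const (Or.inr hα))
  have hc0 : 0 ≤ c := le_of_lt (lt_of_le_of_lt hb hc.1)
  have key : a ^ α - b ^ α = α * c ^ (α - 1) * (a - b) := by
    rw [hderiv, div_mul_cancel₀ _ (by linarith : a - b ≠ 0)]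
  rw [key]
  have h1 : c ^ (α - 1) ≤ a ^ (α - 1) :=
    Real.rpow_le_rpow hc0 (le_of_lt hc.2) (by linarith)
  have hα0 : (0:ℝ) ≤ α := by linarith
  exact mul_le_mul_of_nonneg_right (mul_le_mul_of_nonneg_left h1 hα0) (by linarith)

lemma my_hasDerivAt {α : ℝ} (hα : 1 < α) {x : ℝ} (hx : 1 < x) :
    HasDerivAt (fun x : ℝ => Real.log (max x 1) ^ α)
      (α * Real.log x ^ (α - 1) * x⁻¹) x := by
  have hx0 : x ≠ 0 := by linarith
  have h1 : HasDerivAt (fun t : ℝ => Real.log t ^ α) (α * Real.log x ^ (α - 1) * x⁻¹) x :=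
    (Real.hasDerivAt_rpow_const (p := α) (Or.inr hα.le)).comp x (Real.hasDerivAt_log hx0)
  apply h1.congr_of_eventuallyEq
  filter_upwards [eventually_gt_nhds hx] with t ht
  rw [max_eq_left (le_of_lt ht)]

lemma my_monotone (α : ℝ) (hα : 1 < α) :
    Monotone (fun x : ℝ => Real.log (max x 1) ^ α) := by
  intro a b hab
  exact Real.rpow_le_rpow (Real.log_nonneg (le_max_right _ _))
    (Real.log_le_log (by positivity) (max_le_max hab le_rfl)) (by linarith)

lemma my_tendsto (α : ℝ) (hα : 1 < α) :
    Tendsto (deriv (fun x : ℝ => Real.log (max x 1) ^ α)) atTop (nhds 0) := by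
  have heq : deriv (fun x : ℝ => Real.log (max x 1) ^ α)
      =ᶠ[atTop] fun x => α * (Real.log x ^ (α - 1) / x ^ (1:ℝ)) := by
    filter_upwards [eventually_gt_atTop 1] with x hx
    rw [(my_hasDerivAt hα hx).deriv, Real.rpow_one]
    ring
  refine Tendsto.congr' heq.symm ?_
  have h := (isLittleO_log_rpow_rpow_atTop (α - 1) one_pos).tendsto_div_nhds_zero
  simpa using h.const_mul α

lemma my_integrable (α : ℝ) (hα : 1 < α) :
    IntegrableOn
      (fun x : ℝ => Real.exp (-(1 - 1/2) * Real.log (max x 1) ^ α)) (Set.Ici 1) := by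
  set f := fun x : ℝ => Real.exp (-(1 - 1/2) * Real.log (max x 1) ^ α) with hf
  have hcont : Continuous f := by
    apply Real.continuous_exp.comp
    apply Continuous.mul continuous_const
    apply (Real.continuous_rpow_const (by linarith : (0:ℝ) ≤ α)).comp
    refine continuous_iff_continuousAt.2 fun x => ?_
    exact (Real.continuousAt_log (by positivity)).comp
      ((continuous_id.max continuous_const).continuousAt)
  set L : ℝ := max 1 ((4:ℝ) ^ (α - 1)⁻¹) with hL
  set M : ℝ := Real.exp L with hM
  have hL1 : 1 ≤ L := le_max_left _ _
  have hM1 : 1 < M := by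
    rw [hM]; calc (1:ℝ) < Real.exp 1 := by simpa using Real.exp_lt_exp.2 (by norm_num : (0:ℝ) < 1)
    _ ≤ Real.exp L := Real.exp_le_exp.2 hL1
  have h1 : IntegrableOn f (Icc 1 M) := hcont.continuousOn.integrableOn_Icc
  have h2 : IntegrableOn f (Ioi M) := by
    refine Integrable.mono' (integrableOn_Ioi_rpow_of_lt (by norm_num : (-2:ℝ) < -1)
      (by linarith : (0:ℝ) < M)) hcont.aestronglyMeasurable.restrict ?_
    rw [ae_restrict_iff' measurableSet_Ioi]
    refine Eventually.of_forall fun x hx => ?_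
    simp only [Set.mem_Ioi] at hx
    have hx1 : 1 < x := lt_trans hM1 hx
    have hx0 : 0 < x := by linarith
    have hlog : L ≤ Real.log x := by
      rw [hM] at hx
      calc L = Real.log (Real.exp L) := (Real.log_exp L).symm
      _ ≤ Real.log x := Real.log_le_log (Real.exp_pos L) hx.le
    have hlog1 : 1 ≤ Real.log x := le_trans hL1 hlog
    have hlogpos : 0 < Real.log x := by linarith
    have h4 : (4:ℝ) ≤ Real.log x ^ (α - 1) := by
      have : ((4:ℝ) ^ (α - 1)⁻¹) ^ (α - 1) ≤ Real.log x ^ (α - 1) :=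
        Real.rpow_le_rpow (by positivity) (le_trans (le_max_right _ _) hlog) (by linarith)
      rwa [← Real.rpow_mul (by norm_num : (0:ℝ) ≤ 4),
        inv_mul_cancel₀ (by linarith : α - 1 ≠ 0), Real.rpow_one] at this
    have hkey : 4 * Real.log x ≤ Real.log x ^ α := by
      have : Real.log x ^ α = Real.log x ^ (α - 1) * Real.log x := by
        rw [← Real.rpow_add_one (ne_of_gt hlogpos)]; ring_nf
      rw [this]
      exact mul_le_mul_of_nonneg_right h4 hlogpos.le
    have hnorm : ‖f x‖ = Real.exp (-(1 - 1/2) * Real.log x ^ α) := by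
      rw [hf]; simp [Real.norm_eq_abs, abs_of_pos (Real.exp_pos _), max_eq_left hx1.le]
    rw [hnorm, Real.rpow_def_of_pos hx0]
    apply Real.exp_le_exp.2
    nlinarith
  exact (h1.union h2).mono_set (fun x hx => by
    rcases le_or_gt x M with h | h
    · exact Or.inl ⟨hx, h⟩
    · exact Or.inr h)

lemma my_ineq (α : ℝ) (hα : 1 < α) :
    ∃ x₀ > (0:ℝ), ∃ A > (0:ℝ), ∀ x y : ℝ, x₀ < y → y ≤ x / 2 →
        Real.log (max x 1) ^ α - Real.log (max (x - y) 1) ^ α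
          ≤ (1/2) * Real.log (max y 1) ^ α + A := by
  have hα1 : 0 < α - 1 := by linarith
  have hα0 : 0 < α := by linarith
  set K : ℝ := (2 * (α - 1)) ^ (α - 1) with hK
  set T : ℝ := 2 * α * Real.log 2 * 2 ^ α with hT
  have hlog2 : 0 < Real.log 2 := Real.log_pos (by norm_num)
  have hKpos : 0 < K := Real.rpow_pos_of_pos (by linarith) _
  have hTpos : 0 < T := by positivity
  set A₂ : ℝ := α * Real.log 2 * T ^ (α - 1) with hA₂
  have hA₂pos : 0 < A₂ := by positivity
  have hαK : 0 < α * K := mul_pos hα0 hKpos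
  refine ⟨2, by norm_num, 2 * α * K + A₂, by positivity, fun x y hy hyx => ?_⟩
  have hy2 : 2 < y := hy
  have hx4 : 4 < x := by linarith
  have hxy : y ≤ x - y := by linarith
  have hxy2 : 2 < x - y := by linarith
  rw [max_eq_left (by linarith : (1:ℝ) ≤ x), max_eq_left (by linarith : (1:ℝ) ≤ x - y),
    max_eq_left (by linarith : (1:ℝ) ≤ y)]
  set a : ℝ := Real.log x with ha
  set b : ℝ := Real.log (x - y) with hb
  set c : ℝ := Real.log y with hc
  have hbpos : 0 < b := Real.log_pos (by linarith)
  have hcpos : 0 < c := Real.log_pos (by linarith)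
  have hba : b ≤ a := Real.log_le_log (by linarith) (by linarith)
  have hapos : 0 < a := lt_of_lt_of_le hbpos hba
  have hcα : 0 ≤ c ^ α := Real.rpow_nonneg hcpos.le α
  have hmain : a ^ α - b ^ α ≤ α * a ^ (α - 1) * (a - b) :=
    my_rpow_sub_rpow_le hα.le hbpos.le hba
  -- bound (i): a - b ≤ log 2
  have hi : a - b ≤ Real.log 2 := by
    have : a ≤ Real.log 2 + b := by
      rw [ha, hb, ← Real.log_mul (by norm_num) (by linarith : x - y ≠ 0)]
      exact Real.log_le_log (by linarith) (by linarith)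
    linarith
  -- bound (ii): a - b ≤ 2 * y / x
  have hii : a - b ≤ 2 * y / x := by
    have hdiv : a - b = Real.log (x / (x - y)) := by
      rw [ha, hb, Real.log_div (by linarith) (by linarith)]
    have h1 : Real.log (x / (x - y)) ≤ x / (x - y) - 1 :=
      Real.log_le_sub_one_of_pos (by positivity)
    have h2 : x / (x - y) - 1 = y / (x - y) := by field_simp; ring
    have h3 : y / (x - y) ≤ 2 * y / x := by
      rw [div_le_div_iff₀ (by linarith) (by linarith)]
      nlinarith
    linarith [hdiv ▸ h1]
  rcases le_or_gt (y ^ 2) x with hcase | hcase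
  · -- y² ≤ x : small-y case, bound by constant 2αK
    have hsx : 0 < Real.sqrt x := Real.sqrt_pos.2 (by linarith)
    have hsq : Real.sqrt x * Real.sqrt x = x := Real.mul_self_sqrt (by linarith)
    have hys : y ≤ Real.sqrt x := by nlinarith [hsq, hsx, hy2]
    have hεa : a ^ (α - 1) ≤ Real.sqrt x * K := by
      set ε : ℝ := (2 * (α - 1))⁻¹ with hε
      have hεpos : (0:ℝ) < ε := by positivity
      have h1 : a ≤ x ^ ε / ε := Real.log_le_rpow_div (by linarith) hεpos
      have h2 : a ^ (α - 1) ≤ (x ^ ε / ε) ^ (α - 1) :=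
        Real.rpow_le_rpow hapos.le h1 hα1.le
      have h3 : (x ^ ε / ε) ^ (α - 1) = Real.sqrt x * K := by
        rw [div_eq_mul_inv, hε, inv_inv,
          Real.mul_rpow (by positivity) (by linarith),
          ← Real.rpow_mul (by linarith : (0:ℝ) ≤ x),
          show (2 * (α - 1))⁻¹ * (α - 1) = 1/2 by field_simp,
          ← Real.sqrt_eq_rpow]
      linarith [h3 ▸ h2]
    have step1 : α * a ^ (α - 1) * (a - b) ≤ α * (Real.sqrt x * K) * (2 * y / x) := by
      have t1 : α * a ^ (α - 1) * (a - b) ≤ α * (Real.sqrt x * K) * (a - b) :=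
        mul_le_mul_of_nonneg_right (mul_le_mul_of_nonneg_left hεa hα0.le)
          (by linarith)
      have t2 : α * (Real.sqrt x * K) * (a - b) ≤ α * (Real.sqrt x * K) * (2 * y / x) :=
        mul_le_mul_of_nonneg_left hii (by positivity)
      linarith
    have step2 : α * (Real.sqrt x * K) * (2 * y / x) ≤ 2 * α * K := by
      have t3 : α * (Real.sqrt x * K) * (2 * y / x)
          ≤ α * (Real.sqrt x * K) * (2 * Real.sqrt x / x) := by
        apply mul_le_mul_of_nonneg_left _ (by positivity)
        apply div_le_div_of_nonneg_right (by linarith) (by linarith)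
      have t4 : α * (Real.sqrt x * K) * (2 * Real.sqrt x / x) = 2 * α * K := by
        field_simp
        linear_combination hsq
      linarith
    linarith
  · -- x < y² : then a ≤ 2c
    have hax : a ≤ 2 * c := by
      have : a < Real.log (y ^ 2) := Real.log_lt_log (by linarith) hcase
      rw [Real.log_pow] at this
      push_cast at this
      linarith
    have hstep : a ^ α - b ^ α ≤ α * a ^ (α - 1) * Real.log 2 := by
      calc a ^ α - b ^ α ≤ α * a ^ (α - 1) * (a - b) := hmain
      _ ≤ α * a ^ (α - 1) * Real.log 2 :=
        mul_le_mul_of_nonneg_left hi (by positivity)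
    rcases le_or_gt a T with haT | haT
    · have h := Real.rpow_le_rpow hapos.le haT hα1.le
      have hineq : α * a ^ (α - 1) * Real.log 2 ≤ A₂ := by
        calc α * a ^ (α - 1) * Real.log 2 = (α * Real.log 2) * a ^ (α - 1) := by ring
        _ ≤ (α * Real.log 2) * T ^ (α - 1) :=
            mul_le_mul_of_nonneg_left h (mul_nonneg hα0.le hlog2.le)
        _ = A₂ := by rw [hA₂]
      linarith
    · have hsub : a ^ (α - 1) = a ^ α / a := Real.rpow_sub_one (ne_of_gt hapos) α
      have hpow : a ^ α ≤ 2 ^ α * c ^ α := by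
        calc a ^ α ≤ (2 * c) ^ α := Real.rpow_le_rpow hapos.le hax hα0.le
        _ = 2 ^ α * c ^ α := Real.mul_rpow (by norm_num) hcpos.le
      have s12 : a ^ α / a ≤ 2 ^ α * c ^ α / T :=
        div_le_div₀ (by positivity) hpow hTpos haT.le
      have s3 : α * (2 ^ α * c ^ α / T) * Real.log 2 = (1/2) * c ^ α := by
        have h2α : ((2:ℝ) ^ α) ≠ 0 := ne_of_gt (Real.rpow_pos_of_pos two_pos α)
        have hl2 : Real.log 2 ≠ 0 := ne_of_gt hlog2
        have hαne : α ≠ 0 := ne_of_gt hα0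
        rw [hT]; field_simp
      have : α * a ^ (α - 1) * Real.log 2 ≤ (1/2) * c ^ α := by
        rw [hsub, ← s3]
        exact mul_le_mul_of_nonneg_right (mul_le_mul_of_nonneg_left s12 hα0.le) hlog2.le
      linarith

/-- **Example, function `g₁(x) = (log max(x,1))^α`, `α > 1`,** satisfies the substance
of conditions (C1)–(C3). -/
theorem g_log_pow_satisfies_conditions (α : ℝ) (hα : 1 < α) :
    Monotone (fun x : ℝ => Real.log (max x 1) ^ α) ∧
    (∀ x ∈ Set.Ioi (1:ℝ),
      DifferentiableAt ℝ (fun x : ℝ => Real.log (max x 1) ^ α) x) ∧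
    Tendsto (deriv (fun x : ℝ => Real.log (max x 1) ^ α)) atTop (nhds 0) ∧
    ∃ γ ∈ Set.Ioo (0:ℝ) 1,
      IntegrableOn
        (fun x : ℝ => Real.exp (-(1 - γ) * Real.log (max x 1) ^ α)) (Set.Ici 1) ∧
      ∃ x₀ > (0:ℝ), ∃ A > (0:ℝ), ∀ x y : ℝ, x₀ < y → y ≤ x / 2 →
        Real.log (max x 1) ^ α - Real.log (max (x - y) 1) ^ α
          ≤ γ * Real.log (max y 1) ^ α + A := by
  refine ⟨my_monotone α hα, fun x hx => (my_hasDerivAt hα hx).differentiableAt,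
    my_tendsto α hα, 1/2, ⟨by norm_num, by norm_num⟩, my_integrable α hα, my_ineq α hα⟩
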